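/- Let K^perf be the perfection of a local field K of characteristic p with residue field k, and for each integer i ≥ 0 let W_i(K^perf/O_{K^perf}) be the left R°-submodule of K^perf/O_{K^perf} generated by the classes [ξ_j] with p ∤ j and j < i (where ξ_j ∈ K has normalized valuation -j). Then W_i(K^perf/O_{K^perf}) equals the R°-submodule generated by the residue classes of all elements of K (not K^perf) of normalized valuation > -i. -/

import Mathlib

/-!
STATEMENT 8: With `K = k((t)) = LaurentSeries k` a local field of characteristic `p`,
`Kperf = PerfectClosure K p` its perfection, `O_{Kperf}` its valuation ring, and
`R° = k[τ^{±1}]` the twisted Laurent polynomial ring (acting via `ℤ`-powers of Frobenius):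
for every `i ≥ 0` the submodule `W_i(Kperf/O_{Kperf})`, defined as the left `R°`-span of the
classes `[ξ_j]` for `p ∤ j < i` (`ξ_j ∈ K` of normalized valuation `-j`), coincides with the
`R°`-span of the classes of *all* elements of `K` of normalized valuation `> -i`.
Membership of `[m]` in the span of a set of classes is expressed by: `m` differs from a finite
twisted-Laurent-polynomial combination of elements of the set by an element of `O_{Kperf}`.
-/

noncomputable section
set_option linter.unusedSectionVars false
set_option synthInstance.maxHeartbeats 1000000
set_option maxHeartbeats 1000000

variable (p : ℕ) [Fact p.Prime] (k : Type) [Field k] [Fintype k] [CharP k p]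

instance : CharP (LaurentSeries k) p :=
  charP_of_injective_ringHom (HahnSeries.C_injective (Γ := ℤ) (R := k)) p

abbrev Kperf := PerfectClosure (LaurentSeries k) p

abbrev ιK : LaurentSeries k →+* Kperf p k := PerfectClosure.of (LaurentSeries k) p

/-- The valuation ring of the perfection. -/
def Operf : Set (Kperf p k) :=
  {ξ | ∀ (m : ℕ) (z : LaurentSeries k), ξ ^ (p ^ m) = ιK p k z → 0 ≤ z.orderTop}

/-- Action of a twisted Laurent polynomial on the perfection. -/
def twistedLaurentAct (q : LaurentPolynomial k) (ξ : Kperf p k) : Kperf p k :=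
  Finsupp.sum q.coeff fun i a => ιK p k (HahnSeries.C a) * ((frobeniusEquiv (Kperf p k) p ^ i) ξ)

/-- `[m]` lies in the left `R°`-submodule of `Kperf/O_{Kperf}` generated by the classes of the
elements of `S`. -/
def InTwistedSpan (S : Set (Kperf p k)) (m : Kperf p k) : Prop :=
  ∃ (t : Finset (Kperf p k)) (c : Kperf p k → LaurentPolynomial k),
    ↑t ⊆ S ∧ (m - ∑ ξ ∈ t, twistedLaurentAct p k (c ξ) ξ) ∈ Operf p k

-- ## helpers

lemma frob_mul_apply (g h : Kperf p k ≃+* Kperf p k) (x : Kperf p k) : (g * h) x = g (h x) := rfl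

lemma frobZ_natCast (n : ℕ) (x : Kperf p k) :
    (frobeniusEquiv (Kperf p k) p ^ (n : ℤ)) x = x ^ p ^ n := by
  rw [zpow_natCast, ← iterateFrobeniusEquiv_eq_pow, iterateFrobeniusEquiv_def]

lemma frobZ_pow (a : ℤ) (m : ℕ) (x : Kperf p k) :
    ((frobeniusEquiv (Kperf p k) p ^ a) x) ^ p ^ m
      = (frobeniusEquiv (Kperf p k) p ^ (a + m)) x := by
  rw [← frobZ_natCast p k m, ← frob_mul_apply, ← zpow_add, add_comm]

lemma exists_pow_eq (x : Kperf p k) : ∃ (m : ℕ) (z : LaurentSeries k), x ^ p ^ m = ιK p k z := by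
  refine PerfectClosure.induction_on x fun y => ⟨y.1, y.2, ?_⟩
  rw [← iterate_frobenius]
  exact PerfectClosure.iterate_frobenius_mk (LaurentSeries k) p y.1 y.2

lemma inj_ι : Function.Injective (ιK p k) := (ιK p k).injective

lemma ordTop_pow_iff (z : LaurentSeries k) {n : ℕ} (hn : 0 < n) :
    0 ≤ (z ^ n).orderTop ↔ 0 ≤ z.orderTop := by
  rw [HahnSeries.zero_le_orderTop_iff, HahnSeries.zero_le_orderTop_iff, HahnSeries.order_pow,
    nsmul_eq_mul]
  have hn' : (0:ℤ) < n := by exact_mod_cast hn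
  constructor
  · intro h
    by_contra hneg
    push_neg at hneg
    nlinarith [mul_pos hn' (neg_pos.mpr hneg)]
  · intro h
    exact mul_nonneg (le_of_lt hn') h

lemma mem_Operf_iff (x : Kperf p k) :
    x ∈ Operf p k ↔ ∃ (m : ℕ) (z : LaurentSeries k), x ^ p ^ m = ιK p k z ∧ 0 ≤ z.orderTop := by
  have hppos : 0 < p := (Fact.out : p.Prime).pos
  constructor
  · intro hx
    obtain ⟨m, z, hz⟩ := exists_pow_eq p k x
    exact ⟨m, z, hz, hx m z hz⟩
  · rintro ⟨m, z, hz, h0⟩ m' z' hz'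
    rcases le_total m m' with h | h
    · have e1 : x ^ p ^ m' = ιK p k (z ^ p ^ (m' - m)) := by
        rw [map_pow, ← hz, ← pow_mul, ← pow_add, Nat.add_sub_cancel' h]
      have e2 : z' = z ^ p ^ (m' - m) := inj_ι p k (by rw [← hz', e1])
      rw [e2]
      exact (ordTop_pow_iff k z (pow_pos hppos _)).mpr h0
    · have e1 : x ^ p ^ m = ιK p k (z' ^ p ^ (m - m')) := by
        rw [map_pow, ← hz', ← pow_mul, ← pow_add, Nat.add_sub_cancel' h]
      have e2 : z = z' ^ p ^ (m - m') := inj_ι p k (by rw [← hz, e1])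
      exact (ordTop_pow_iff k z' (pow_pos hppos _)).mp (by rw [← e2]; exact h0)

lemma Operf_zero : (0 : Kperf p k) ∈ Operf p k := by
  rw [mem_Operf_iff]
  exact ⟨0, 0, by simp, by simp⟩

lemma Operf_add {x y : Kperf p k} (hx : x ∈ Operf p k) (hy : y ∈ Operf p k) :
    x + y ∈ Operf p k := by
  have hppos : 0 < p := (Fact.out : p.Prime).pos
  rw [mem_Operf_iff] at hx hy ⊢
  obtain ⟨m1, z1, e1, h1⟩ := hx
  obtain ⟨m2, z2, e2, h2⟩ := hy
  refine ⟨m1 + m2, z1 ^ p ^ m2 + z2 ^ p ^ m1, ?_, ?_⟩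
  · rw [add_pow_char_pow, map_add, map_pow, map_pow, ← e1, ← e2, ← pow_mul, ← pow_mul,
      ← pow_add, ← pow_add, add_comm m2 m1]
  · refine le_trans (le_min ?_ ?_) HahnSeries.min_orderTop_le_orderTop_add
    · exact (ordTop_pow_iff k z1 (pow_pos hppos _)).mpr h1
    · exact (ordTop_pow_iff k z2 (pow_pos hppos _)).mpr h2

lemma Operf_frob (n : ℤ) {x : Kperf p k} (hx : x ∈ Operf p k) :
    (frobeniusEquiv (Kperf p k) p ^ n) x ∈ Operf p k := by
  have hppos : 0 < p := (Fact.out : p.Prime).pos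
  rw [mem_Operf_iff] at hx ⊢
  obtain ⟨m, z, e, h0⟩ := hx
  set M : ℕ := ((m : ℤ) - n).toNat with hM
  set e2 : ℕ := (n + (M : ℤ) - m).toNat with he2
  have hsum : n + (M : ℤ) = (m : ℤ) + e2 := by omega
  refine ⟨M, z ^ p ^ e2, ?_, (ordTop_pow_iff k z (pow_pos hppos _)).mpr h0⟩
  rw [frobZ_pow, hsum, ← frobZ_pow, frobZ_natCast, e, map_pow]

lemma Operf_Cmul (a : k) {x : Kperf p k} (hx : x ∈ Operf p k) :
    ιK p k (HahnSeries.C a) * x ∈ Operf p k := by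
  have hppos : 0 < p := (Fact.out : p.Prime).pos
  rw [mem_Operf_iff] at hx ⊢
  obtain ⟨m, z, e, h0⟩ := hx
  refine ⟨m, HahnSeries.C a ^ p ^ m * z, ?_, ?_⟩
  · rw [mul_pow, map_mul, map_pow, e]
  · refine le_trans ?_ HahnSeries.orderTop_add_le_mul
    have hC : (0 : WithTop ℤ) ≤ (HahnSeries.C a : LaurentSeries k).orderTop := by
      rcases eq_or_ne a 0 with rfl | ha
      · simp
      · rw [HahnSeries.C_apply, HahnSeries.orderTop_single (by simpa using ha)]
        simp
    have h1 : (0 : WithTop ℤ) ≤ ((HahnSeries.C a : LaurentSeries k) ^ p ^ m).orderTop :=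
      (ordTop_pow_iff k _ (pow_pos hppos _)).mpr hC
    exact add_nonneg h1 h0

lemma act_zero (x : Kperf p k) : twistedLaurentAct p k 0 x = 0 :=
  Finsupp.sum_zero_index

lemma act_add (q r : LaurentPolynomial k) (x : Kperf p k) :
    twistedLaurentAct p k (q + r) x = twistedLaurentAct p k q x + twistedLaurentAct p k r x :=
  Finsupp.sum_add_index' (by intro i; simp) (by intro i a b; rw [map_add, map_add, add_mul])

lemma act_single (n : ℤ) (a : k) (x : Kperf p k) :
    twistedLaurentAct p k (AddMonoidAlgebra.single n a) x
      = ιK p k (HahnSeries.C a) * (frobeniusEquiv (Kperf p k) p ^ n) x :=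
  Finsupp.sum_single_index (by simp)

def actHom (x : Kperf p k) : LaurentPolynomial k →+ Kperf p k where
  toFun q := twistedLaurentAct p k q x
  map_zero' := act_zero p k x
  map_add' q r := act_add p k q r x

lemma frobZ_C (n : ℤ) (b : k) :
    (frobeniusEquiv (Kperf p k) p ^ n) (ιK p k (HahnSeries.C b))
      = ιK p k (HahnSeries.C ((frobeniusEquiv k p ^ n) b)) := by
  have step : ∀ c : k, frobeniusEquiv (Kperf p k) p (ιK p k (HahnSeries.C c))
      = ιK p k (HahnSeries.C (frobeniusEquiv k p c)) := by
    intro c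
    rw [frobeniusEquiv_def, frobeniusEquiv_def, ← map_pow, ← map_pow]
  have stepinv : ∀ c : k, (frobeniusEquiv (Kperf p k) p).symm (ιK p k (HahnSeries.C c))
      = ιK p k (HahnSeries.C ((frobeniusEquiv k p).symm c)) := by
    intro c
    apply (frobeniusEquiv (Kperf p k) p).injective
    rw [RingEquiv.apply_symm_apply, step, RingEquiv.apply_symm_apply]
  induction n using Int.induction_on with
  | zero => rw [zpow_zero, zpow_zero]; rfl
  | succ n ih =>
      have h1 : ((n : ℤ) + 1) = 1 + (n : ℤ) := by ring
      rw [h1, zpow_add, zpow_one, frob_mul_apply, ih, step, zpow_add, zpow_one]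
      rfl
  | pred n ih =>
      have h1 : (-(n : ℤ) - 1) = -1 + (-(n : ℤ)) := by ring
      rw [h1, zpow_add, frob_mul_apply, ih, zpow_neg_one]
      rw [show ((frobeniusEquiv (Kperf p k) p)⁻¹ : Kperf p k ≃+* Kperf p k)
            = (frobeniusEquiv (Kperf p k) p).symm from rfl, stepinv]
      rw [zpow_add, zpow_neg_one]
      rfl

def twistPoly (n : ℤ) (q : LaurentPolynomial k) : LaurentPolynomial k :=
  Finsupp.sum q.coeff fun i b => AddMonoidAlgebra.single (n + i) ((frobeniusEquiv k p ^ n) b)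

lemma act_twist (n : ℤ) (q : LaurentPolynomial k) (x : Kperf p k) :
    twistedLaurentAct p k (twistPoly p k n q) x
      = (frobeniusEquiv (Kperf p k) p ^ n) (twistedLaurentAct p k q x) := by
  have lhs : twistedLaurentAct p k (twistPoly p k n q) x
      = Finsupp.sum q.coeff fun i b =>
          ιK p k (HahnSeries.C ((frobeniusEquiv k p ^ n) b))
            * (frobeniusEquiv (Kperf p k) p ^ (n + i)) x := by
    show actHom p k x (twistPoly p k n q) = _
    rw [twistPoly, map_finsuppSum]
    exact Finsupp.sum_congr fun i _ => act_single p k (n + i) _ x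
  rw [lhs, twistedLaurentAct, map_finsuppSum]
  refine Finsupp.sum_congr fun i _ => ?_
  rw [map_mul, frobZ_C, ← frob_mul_apply, ← zpow_add]

lemma act_smul (a : k) (q : LaurentPolynomial k) (x : Kperf p k) :
    twistedLaurentAct p k (a • q) x = ιK p k (HahnSeries.C a) * twistedLaurentAct p k q x := by
  rw [twistedLaurentAct, twistedLaurentAct, AddMonoidAlgebra.coeff_smul, Finsupp.sum_smul_index (by intro i; simp),
    Finsupp.mul_sum]
  refine Finsupp.sum_congr fun i _ => ?_
  rw [map_mul, map_mul, mul_assoc]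

lemma span_of_mem_Operf (S : Set (Kperf p k)) {m : Kperf p k} (h : m ∈ Operf p k) :
    InTwistedSpan p k S m :=
  ⟨∅, fun _ => 0, by simp, by simpa using h⟩

lemma span_add {S : Set (Kperf p k)} {m₁ m₂ : Kperf p k}
    (h₁ : InTwistedSpan p k S m₁) (h₂ : InTwistedSpan p k S m₂) :
    InTwistedSpan p k S (m₁ + m₂) := by
  classical
  obtain ⟨t₁, c₁, hs₁, ho₁⟩ := h₁
  obtain ⟨t₂, c₂, hs₂, ho₂⟩ := h₂
  refine ⟨t₁ ∪ t₂, fun ξ => (if ξ ∈ t₁ then c₁ ξ else 0) + (if ξ ∈ t₂ then c₂ ξ else 0), ?_, ?_⟩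
  · rw [Finset.coe_union]
    exact Set.union_subset hs₁ hs₂
  · have e : ∑ ξ ∈ t₁ ∪ t₂,
        twistedLaurentAct p k ((if ξ ∈ t₁ then c₁ ξ else 0) + (if ξ ∈ t₂ then c₂ ξ else 0)) ξ
        = (∑ ξ ∈ t₁, twistedLaurentAct p k (c₁ ξ) ξ)
          + (∑ ξ ∈ t₂, twistedLaurentAct p k (c₂ ξ) ξ) := by
      simp only [act_add]
      rw [Finset.sum_add_distrib]
      congr 1
      · rw [← Finset.sum_subset Finset.subset_union_left
          (fun x _ hx => by rw [if_neg hx, act_zero])]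
        exact Finset.sum_congr rfl fun x hx => by rw [if_pos hx]
      · rw [← Finset.sum_subset Finset.subset_union_right
          (fun x _ hx => by rw [if_neg hx, act_zero])]
        exact Finset.sum_congr rfl fun x hx => by rw [if_pos hx]
    rw [e, show m₁ + m₂ - ((∑ ξ ∈ t₁, twistedLaurentAct p k (c₁ ξ) ξ)
          + (∑ ξ ∈ t₂, twistedLaurentAct p k (c₂ ξ) ξ))
        = (m₁ - ∑ ξ ∈ t₁, twistedLaurentAct p k (c₁ ξ) ξ)
          + (m₂ - ∑ ξ ∈ t₂, twistedLaurentAct p k (c₂ ξ) ξ) by ring]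
    exact Operf_add p k ho₁ ho₂

lemma span_frob {S : Set (Kperf p k)} {m : Kperf p k} (n : ℤ) (h : InTwistedSpan p k S m) :
    InTwistedSpan p k S ((frobeniusEquiv (Kperf p k) p ^ n) m) := by
  obtain ⟨t, c, hs, ho⟩ := h
  refine ⟨t, fun ξ => twistPoly p k n (c ξ), hs, ?_⟩
  have e : ∑ ξ ∈ t, twistedLaurentAct p k (twistPoly p k n (c ξ)) ξ
      = (frobeniusEquiv (Kperf p k) p ^ n) (∑ ξ ∈ t, twistedLaurentAct p k (c ξ) ξ) := by
    rw [map_sum]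
    exact Finset.sum_congr rfl fun ξ _ => act_twist p k n (c ξ) ξ
  rw [e, ← map_sub]
  exact Operf_frob p k n ho

lemma span_Cmul {S : Set (Kperf p k)} {m : Kperf p k} (a : k) (h : InTwistedSpan p k S m) :
    InTwistedSpan p k S (ιK p k (HahnSeries.C a) * m) := by
  obtain ⟨t, c, hs, ho⟩ := h
  refine ⟨t, fun ξ => a • c ξ, hs, ?_⟩
  have e : ∑ ξ ∈ t, twistedLaurentAct p k (a • c ξ) ξ
      = ιK p k (HahnSeries.C a) * ∑ ξ ∈ t, twistedLaurentAct p k (c ξ) ξ := by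
    rw [Finset.mul_sum]
    exact Finset.sum_congr rfl fun ξ _ => act_smul p k a (c ξ) ξ
  rw [e, ← mul_sub]
  exact Operf_Cmul p k a ho

lemma span_act {S : Set (Kperf p k)} {m : Kperf p k} (q : LaurentPolynomial k)
    (h : InTwistedSpan p k S m) : InTwistedSpan p k S (twistedLaurentAct p k q m) := by
  induction q using AddMonoidAlgebra.induction with
  | zero => rw [act_zero]; exact span_of_mem_Operf p k S (Operf_zero p k)
  | single_add n a f _ _ ih =>
      rw [act_add, act_single]
      exact span_add p k (span_Cmul p k a (span_frob p k n h)) ih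

lemma span_act_gen {S : Set (Kperf p k)} {s : Kperf p k} (hs : s ∈ S)
    (q : LaurentPolynomial k) : InTwistedSpan p k S (twistedLaurentAct p k q s) := by
  refine ⟨{s}, fun _ => q, by simpa, ?_⟩
  rw [Finset.sum_singleton, sub_self]
  exact Operf_zero p k

lemma span_mono {S S' : Set (Kperf p k)} (hSS : S ⊆ S') {m : Kperf p k}
    (h : InTwistedSpan p k S m) : InTwistedSpan p k S' m := by
  obtain ⟨t, c, hs, ho⟩ := h
  exact ⟨t, c, hs.trans hSS, ho⟩

lemma le_orderTop {x : LaurentSeries k} {g : ℤ} (h : ∀ g' < g, x.coeff g' = 0) :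
    (g : WithTop ℤ) ≤ x.orderTop := by
  by_contra hc
  push_neg at hc
  have hx : x ≠ 0 := by
    rintro rfl
    rw [HahnSeries.orderTop_zero] at hc
    exact absurd hc (by simp)
  obtain ⟨g0, hg0⟩ := WithTop.ne_top_iff_exists.mp (HahnSeries.orderTop_ne_top.mpr hx)
  refine absurd (h g0 ?_) (HahnSeries.coeff_orderTop_ne hg0.symm)
  rw [← hg0] at hc
  exact_mod_cast hc

lemma gen_span (S : Set (Kperf p k)) (ξ : ℕ → LaurentSeries k)
    (hξ : ∀ j, 0 < j → ¬ p ∣ j → (ξ j).orderTop = ((-(j : ℤ) : ℤ) : WithTop ℤ))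
    (i : ℕ) (hS : ∀ j, 0 < j → j < i → ¬ p ∣ j → ιK p k (ξ j) ∈ S) (n : ℕ) :
    ∀ z : LaurentSeries k, ((-(i : ℤ) : ℤ) : WithTop ℤ) < z.orderTop →
      ((-(n : ℤ) : ℤ) : WithTop ℤ) ≤ z.orderTop → InTwistedSpan p k S (ιK p k z) := by
  induction n using Nat.strong_induction_on with
  | _ n IH =>
  intro z hzi hzn
  by_cases h0 : 0 ≤ z.orderTop
  · exact span_of_mem_Operf p k S ((mem_Operf_iff p k _).mpr ⟨0, z, by simp, h0⟩)
  push_neg at h0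
  have hz0 : z ≠ 0 := by
    rintro rfl
    rw [HahnSeries.orderTop_zero] at h0
    exact absurd h0 (by simp)
  obtain ⟨g, hg⟩ := WithTop.ne_top_iff_exists.mp (HahnSeries.orderTop_ne_top.mpr hz0)
  have hgneg : g < 0 := by rw [← hg] at h0; exact_mod_cast h0
  have hgi : -(i : ℤ) < g := by rw [← hg] at hzi; exact_mod_cast hzi
  have hgn : -(n : ℤ) ≤ g := by rw [← hg] at hzn; exact_mod_cast hzn
  set j : ℕ := (-g).toNat with hj
  have hjg : (j : ℤ) = -g := by omega
  have hj0 : 0 < j := by omega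
  have hjn : j ≤ n := by omega
  have hji : j < i := by omega
  have hordz : z.orderTop = ((-(j : ℤ) : ℤ) : WithTop ℤ) := by rw [← hg]; congr 1; omega
  set a := z.coeff (-(j : ℤ)) with hadef
  have ha : a ≠ 0 := HahnSeries.coeff_orderTop_ne hordz
  have key : ∀ y : LaurentSeries k, (∀ g', g' < -(j : ℤ) → y.coeff g' = 0) →
      y.coeff (-(j : ℤ)) = a → InTwistedSpan p k S (ιK p k (z - y)) := by
    intro y h1 h2
    have hord' : ((-(j : ℤ) + 1 : ℤ) : WithTop ℤ) ≤ (z - y).orderTop := by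
      apply le_orderTop
      intro g' hg'
      rw [HahnSeries.coeff_sub]
      rcases lt_or_eq_of_le (by omega : g' ≤ -(j : ℤ)) with h' | h'
      · rw [HahnSeries.coeff_eq_zero_of_lt_orderTop (by rw [hordz]; exact_mod_cast h'),
          h1 g' h', sub_zero]
      · rw [h', h2, ← hadef, sub_self]
    apply IH (j - 1) (by omega) (z - y)
    · refine lt_of_lt_of_le ?_ hord'
      exact_mod_cast (by omega : -(i : ℤ) < -(j : ℤ) + 1)
    · have : ((-((j - 1 : ℕ) : ℤ) : ℤ) : WithTop ℤ) = ((-(j : ℤ) + 1 : ℤ) : WithTop ℤ) := by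
        congr 1; omega
      rw [this]; exact hord'
  by_cases hp : p ∣ j
  · -- p divides j : use Frobenius
    have hp2 : 2 ≤ p := (Fact.out : p.Prime).two_le
    set j₀ : ℕ := j / p with hj₀
    have hjj : j = p * j₀ := (Nat.mul_div_cancel' hp).symm
    have hj₀pos : 0 < j₀ := Nat.div_pos (Nat.le_of_dvd hj0 hp) (by omega)
    have hj₀lt : j₀ < j := Nat.div_lt_self hj0 hp2
    set a₀ := (frobeniusEquiv k p).symm a with ha₀def
    have ha₀ : a₀ ^ p = a := frobeniusEquiv_symm_pow_p k p a
    have ha₀0 : a₀ ≠ 0 := by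
      intro hh
      exact ha (by rw [← ha₀, hh, zero_pow (by omega)])
    set w : LaurentSeries k := HahnSeries.single (-(j₀ : ℤ)) a₀ with hw
    have hwp : w ^ p = HahnSeries.single (-(j : ℤ)) a := by
      rw [hw, HahnSeries.single_pow, ha₀]
      congr 1
      rw [nsmul_eq_mul]
      push_cast [hjj]
      ring
    have hspan' := key (w ^ p) (fun g' h' => by
        rw [hwp, HahnSeries.coeff_single_of_ne (by omega)])
      (by rw [hwp, HahnSeries.coeff_single_same])
    have hww : InTwistedSpan p k S (ιK p k w) := by
      apply IH j₀ (by omega) w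
      · rw [hw, HahnSeries.orderTop_single ha₀0]
        exact_mod_cast (by omega : -(i : ℤ) < -(j₀ : ℤ))
      · rw [hw, HahnSeries.orderTop_single ha₀0]
    have hdecomp : ιK p k z
        = ιK p k (z - w ^ p) + (frobeniusEquiv (Kperf p k) p ^ (1 : ℤ)) (ιK p k w) := by
      rw [zpow_one, frobeniusEquiv_def, ← map_pow (ιK p k) w p, ← map_add (ιK p k)]
      congr 1
      ring
    rw [hdecomp]
    exact span_add p k hspan' (span_frob p k 1 hww)
  · -- p does not divide j : use the generator ξ j
    set b := (ξ j).coeff (-(j : ℤ)) with hbdef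
    have hb : b ≠ 0 := HahnSeries.coeff_orderTop_ne (hξ j hj0 hp)
    set y : LaurentSeries k := HahnSeries.C (a * b⁻¹) * ξ j with hy
    have hy1 : ∀ g', g' < -(j : ℤ) → y.coeff g' = 0 := by
      intro g' h'
      rw [hy, HahnSeries.C_mul_eq_smul, HahnSeries.coeff_smul,
        HahnSeries.coeff_eq_zero_of_lt_orderTop (x := ξ j)
          (by rw [hξ j hj0 hp]; exact_mod_cast h'), smul_zero]
    have hy2 : y.coeff (-(j : ℤ)) = a := by
      rw [hy, HahnSeries.C_mul_eq_smul, HahnSeries.coeff_smul, ← hbdef, smul_eq_mul]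
      field_simp
    have hspan' := key y hy1 hy2
    have hdecomp : ιK p k z = ιK p k (z - y)
        + twistedLaurentAct p k (AddMonoidAlgebra.single 0 (a * b⁻¹)) (ιK p k (ξ j)) := by
      rw [act_single, zpow_zero]
      have h1 : ((1 : Kperf p k ≃+* Kperf p k)) (ιK p k (ξ j)) = ιK p k (ξ j) := rfl
      rw [h1, ← map_mul (ιK p k), ← map_add (ιK p k)]
      congr 1
      rw [hy]
      ring
    rw [hdecomp]
    exact span_add p k hspan' (span_act_gen p k (hS j hj0 hji hp) _)

theorem wFiltration_generated_by_small_valuation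
    (ξ : ℕ → LaurentSeries k)
    (hξ : ∀ j, 0 < j → ¬ p ∣ j → (ξ j).orderTop = ((-(j : ℤ) : ℤ) : WithTop ℤ))
    (i : ℕ) (m : Kperf p k) :
    InTwistedSpan p k
        {x | ∃ j : ℕ, 0 < j ∧ j < i ∧ ¬ p ∣ j ∧ x = ιK p k (ξ j)} m ↔
      InTwistedSpan p k
        {x | ∃ z : LaurentSeries k,
          ((-(i : ℤ) : ℤ) : WithTop ℤ) < z.orderTop ∧ x = ιK p k z} m := by

  constructor
  · refine span_mono p k ?_
    rintro x ⟨j, hj0, hji, hjp, rfl⟩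
    refine ⟨ξ j, ?_, rfl⟩
    rw [hξ j hj0 hjp]
    exact_mod_cast (by omega : -(i : ℤ) < -(j : ℤ))
  · rintro ⟨t, c, hs, ho⟩
    have h1 : InTwistedSpan p k
        {x | ∃ j : ℕ, 0 < j ∧ j < i ∧ ¬ p ∣ j ∧ x = ιK p k (ξ j)}
        (m - ∑ x ∈ t, twistedLaurentAct p k (c x) x) :=
      span_of_mem_Operf p k _ ho
    have h2 : InTwistedSpan p k
        {x | ∃ j : ℕ, 0 < j ∧ j < i ∧ ¬ p ∣ j ∧ x = ιK p k (ξ j)}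
        (∑ x ∈ t, twistedLaurentAct p k (c x) x) := by
      refine Finset.sum_induction _ _ (fun _ _ ha hb => span_add p k ha hb)
        (span_of_mem_Operf p k _ (Operf_zero p k)) (fun x hx => ?_)
      obtain ⟨z, hzi, rfl⟩ := hs hx
      refine span_act p k (c (ιK p k z)) ?_
      rcases eq_or_ne z 0 with rfl | hz0
      · exact span_of_mem_Operf p k _ ((mem_Operf_iff p k _).mpr ⟨0, 0, by simp, by simp⟩)
      · obtain ⟨g, hg⟩ := WithTop.ne_top_iff_exists.mp (HahnSeries.orderTop_ne_top.mpr hz0)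
        refine gen_span p k _ ξ hξ i
          (fun j hj0 hji hjp => by exact ⟨j, hj0, hji, hjp, rfl⟩) ((-g).toNat) z hzi ?_
        rw [← hg]
        exact_mod_cast (by omega : -(((-g).toNat : ℕ) : ℤ) ≤ g)
    have := span_add p k h1 h2
    simpa using this

end
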